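/- Under the same rank-1-plus-noise setup (A = σuv* + E, ε = ‖E‖_C/(σ‖u‖_∞‖v‖_∞) ≤ 1/8, μ₁, μ₂ as before), if a_{sj} is maximal in modulus in column j and |v_j|/‖v‖_∞ ≥ μ₂, then |u_s| ≥ μ₂ ‖u‖_∞. -/

import Mathlib

/-- If `A = σuv* + E`, `ε = ‖E‖_C/(σ‖u‖_∞‖v‖_∞) ≤ 1/8`, and `a_{sj}` is a
maximal-in-modulus element of column `j` with `|v_j|/‖v‖_∞ ≥ μ₂`, then
`|u_s| ≥ μ₂‖u‖_∞`. -/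
theorem very_good_column_max {m n : ℕ} [NeZero m] [NeZero n]
    (σ : ℝ) (hσ : 0 < σ)
    (u : Fin m → ℂ) (v : Fin n → ℂ)
    (hu : ∑ i, ‖u i‖ ^ 2 = 1) (hv : ∑ j, ‖v j‖ ^ 2 = 1)
    (A E : Matrix (Fin m) (Fin n) ℂ)
    (hA : ∀ i j, A i j = σ * u i * (starRingEnd ℂ) (v j) + E i j)
    (δ : ℝ) (hδ : δ = ⨆ p : Fin m × Fin n, ‖E p.1 p.2‖)
    (ε : ℝ)
    (hε : ε = δ / (σ * (⨆ i, ‖u i‖) * (⨆ j, ‖v j‖)))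
    (hε8 : ε ≤ 1 / 8)
    (j : Fin n) (s : Fin m)
    (hmax : ∀ i, ‖A i j‖ ≤ ‖A s j‖)
    (hvj : (1 + Real.sqrt (1 - 8 * ε)) / 2 ≤
      ‖v j‖ / (⨆ j, ‖v j‖)) :
    (1 + Real.sqrt (1 - 8 * ε)) / 2 * (⨆ i, ‖u i‖) ≤ ‖u s‖ := by
  set U := ⨆ i, ‖u i‖ with hUdef
  set V := ⨆ k, ‖v k‖ with hVdef
  have hBu : BddAbove (Set.range fun i => ‖u i‖) :=
    Set.Finite.bddAbove (Set.finite_range _)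
  have hBv : BddAbove (Set.range fun k => ‖v k‖) :=
    Set.Finite.bddAbove (Set.finite_range _)
  have hBE : BddAbove (Set.range fun p : Fin m × Fin n => ‖E p.1 p.2‖) :=
    Set.Finite.bddAbove (Set.finite_range _)
  have hle_u : ∀ i, ‖u i‖ ≤ U := fun i => le_ciSup hBu i
  have hle_v : ∀ k, ‖v k‖ ≤ V := fun k => le_ciSup hBv k
  have hEle : ∀ i k, ‖E i k‖ ≤ δ := fun i k => by
    rw [hδ]; exact le_ciSup hBE (i, k)
  obtain ⟨i₀, hi₀⟩ : ∃ i, ∀ k, ‖u k‖ ≤ ‖u i‖ :=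
    Finite.exists_max _
  have hUeq : U = ‖u i₀‖ := le_antisymm (ciSup_le hi₀) (hle_u i₀)
  have hUpos : 0 < U := by
    by_contra h
    push_neg at h
    have h0 : ∀ i, ‖u i‖ = 0 := fun i =>
      le_antisymm ((hle_u i).trans h) (norm_nonneg _)
    simp [h0] at hu
  have hVpos : 0 < V := by
    by_contra h
    push_neg at h
    have h0 : ∀ k, ‖v k‖ = 0 := fun k =>
      le_antisymm ((hle_v k).trans h) (norm_nonneg _)
    simp [h0] at hv
  have hδ0 : 0 ≤ δ :=
    (norm_nonneg _).trans (hEle (Classical.arbitrary _) (Classical.arbitrary _))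
  have hδeq : δ = ε * (σ * U * V) := by
    rw [hε]; field_simp
  have hε0 : 0 ≤ ε := by
    rw [hε]; positivity
  set s0 := Real.sqrt (1 - 8 * ε) with hs0
  have hs0sq : s0 ^ 2 = 1 - 8 * ε := Real.sq_sqrt (by linarith)
  have hs0nn : 0 ≤ s0 := Real.sqrt_nonneg _
  set μ := (1 + s0) / 2 with hμ
  have hμpos : 0 < μ := by rw [hμ]; linarith
  have hvjge : μ * V ≤ ‖v j‖ := (le_div_iff₀ hVpos).mp hvj
  have htri : ∀ x y : ℂ, ‖x‖ - ‖y‖ ≤ ‖x + y‖ := by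
    intro x y
    have h := norm_add_le (x + y) (-y)
    simp only [add_neg_cancel_right, norm_neg] at h
    linarith
  have habsprod : ∀ i, ‖(σ : ℂ) * u i * (starRingEnd ℂ) (v j)‖
      = σ * ‖u i‖ * ‖v j‖ := by
    intro i
    rw [norm_mul, norm_mul, Complex.norm_real, Complex.norm_conj, Real.norm_eq_abs, abs_of_pos hσ]
  have habs1 : σ * U * ‖v j‖ - δ ≤ ‖A i₀ j‖ := by
    rw [hA]
    have := htri ((σ : ℂ) * u i₀ * (starRingEnd ℂ) (v j)) (E i₀ j)
    rw [habsprod i₀] at this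
    have hE := hEle i₀ j
    rw [hUeq]
    linarith
  have habs2 : ‖A s j‖ ≤ σ * ‖u s‖ * ‖v j‖ + δ := by
    rw [hA]
    have h := norm_add_le ((σ : ℂ) * u s * (starRingEnd ℂ) (v j)) (E s j)
    rw [habsprod s] at h
    have hE := hEle s j
    linarith
  have h1 : σ * U * ‖v j‖ - δ ≤ σ * ‖u s‖ * ‖v j‖ + δ :=
    habs1.trans ((hmax i₀).trans habs2)
  have hd : 0 ≤ U - ‖u s‖ := sub_nonneg.mpr (hle_u s)
  have h2 : σ * ‖v j‖ * (U - ‖u s‖) ≤ 2 * δ := by nlinarith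
  have h3 : σ * (μ * V) * (U - ‖u s‖) ≤ 2 * δ := by
    nlinarith [mul_le_mul_of_nonneg_right hvjge (mul_nonneg hσ.le hd)]
  rw [hδeq] at h3
  have h4 : μ * (U - ‖u s‖) ≤ 2 * ε * U := by
    have hσV : (0 : ℝ) < σ * V := by positivity
    have h5 : (σ * V) * (μ * (U - ‖u s‖)) ≤ (σ * V) * (2 * ε * U) := by
      nlinarith [h3]
    exact le_of_mul_le_mul_left h5 hσV
  have h2ε : μ * (1 - μ) = 2 * ε := by
    rw [hμ]; linear_combination (-(1 / 4 : ℝ)) * hs0sq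
  have h6 : μ * (μ * U) ≤ μ * ‖u s‖ := by nlinarith
  exact le_of_mul_le_mul_left h6 hμpos
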